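/- The numerical semigroup Γ generated by 3 and 22 satisfies the semigroup distribution property for d = 8: for every integer l ≥ 1 the half-open interval (8(l − 1), 8l] contains exactly min(l + 1, 8) elements of Γ. -/
import Mathlib


/-- `Γ` satisfies the semigroup distribution property for `d`: for every
`l ≥ 1` the half-open interval `((l−1)d, ld]` contains exactly
`min (l+1) d` elements of `Γ`. -/
def SemigroupDistributionProperty (Γ : Set ℕ) (d : ℕ) : Prop :=
  ∀ l : ℕ, 1 ≤ l →
    {k : ℕ | k ∈ Γ ∧ (l - 1) * d < k ∧ k ≤ l * d}.ncard = min (l + 1) d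

/-- The sporadic case (e): the semigroup `⟨3, 22⟩` of the cusp of the
Orevkov–Artal Bartolo curve of degree 8 satisfies the semigroup distribution
property for `d = 8`. -/
theorem distribution_property_case_e :
    SemigroupDistributionProperty
      {n : ℕ | ∃ x y : ℕ, n = x * 3 + y * 22} 8 := by
  intro l hl
  have key : ∀ k : ℕ, (∃ x y : ℕ, k = x * 3 + y * 22) ↔
      (k % 3 = 0 ∨ (k % 3 = 1 ∧ 22 ≤ k) ∨ (k % 3 = 2 ∧ 44 ≤ k)) := by
    intro k
    constructor
    · rintro ⟨x, y, rfl⟩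
      have h3 : (x * 3 + y * 22) % 3 = y % 3 := by omega
      omega
    · rintro (h | ⟨h1, h2⟩ | ⟨h1, h2⟩)
      · exact ⟨k / 3, 0, by omega⟩
      · exact ⟨(k - 22) / 3, 1, by omega⟩
      · exact ⟨(k - 44) / 3, 2, by omega⟩
  have hset : {k : ℕ | k ∈ {n : ℕ | ∃ x y : ℕ, n = x * 3 + y * 22} ∧
      (l - 1) * 8 < k ∧ k ≤ l * 8} =
      ↑((Finset.Ioc ((l - 1) * 8) (l * 8)).filter
        (fun k => k % 3 = 0 ∨ (k % 3 = 1 ∧ 22 ≤ k) ∨ (k % 3 = 2 ∧ 44 ≤ k))) := by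
    ext k
    simp only [Set.mem_setOf_eq, Finset.coe_filter, Finset.mem_Ioc, key]
    tauto
  rw [hset, Set.ncard_coe_finset]
  rcases le_or_gt l 6 with h | h
  · interval_cases l <;> decide
  · rw [Finset.filter_true_of_mem (fun k hk => by
      simp only [Finset.mem_Ioc] at hk; omega)]
    rw [Nat.card_Ioc]
    omega
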